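/- (Lipschitz estimate for the deformation vector field.) With η(v) := dist(v, {(0,0)} ∪ S_Ω) (a 1-Lipschitz function on ℝ×ℂ) and D(t, v⃗) := Σⱼ η(vⱼ) + |γ̃(t) − Σⱼ vⱼ|, define Xⱼ(t, v⃗) := (η(vⱼ)/D(t,v⃗)) γ̃′(t) for j = 1,…,n. Then for all t and all u⃗, v⃗ ∈ (ℝ×ℂ)ⁿ: Σ_{j=1}^{n} |Xⱼ(t,u⃗) − Xⱼ(t,v⃗)| ≤ 3 (|γ̃′(t)| / D(t,u⃗)) Σ_{j=1}^{n} |uⱼ − vⱼ|. -/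

import Mathlib

open MeasureTheory Metric Set

noncomputable section

/-- A discrete filtered set (d.f.s.): a family of finite subsets of `ℂ`,
nondecreasing in the parameter, empty for small parameter. -/
structure DFS where
  sets : ℝ → Set ℂ
  finite : ∀ L, (sets L).Finite
  mono : ∀ ⦃L₁ L₂ : ℝ⦄, L₁ ≤ L₂ → sets L₁ ⊆ sets L₂
  empty_small : ∃ δ > 0, sets δ = ∅

/-- Upper closure of a filtered family: `Ω̃_L := ⋂_{ε>0} Ω_{L+ε}`. -/
def ucFun (f : ℝ → Set ℂ) (L : ℝ) : Set ℂ := ⋂ ε > (0:ℝ), f (L + ε)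

/-- `S_Ω := {(λ,ω) : λ ≥ 0, ω ∈ Ω_λ}`. -/
def SingSet (f : ℝ → Set ℂ) : Set (ℝ × ℂ) := {p | 0 ≤ p.1 ∧ p.2 ∈ f p.1}

/-- The allowed open set `M_Ω := (ℝ×ℂ) \ closure S_Ω`. -/
def MSet (f : ℝ → Set ℂ) : Set (ℝ × ℂ) := (closure (SingSet f))ᶜ

/-- Sum of two filtered families. -/
def sumFun (f g : ℝ → Set ℂ) (L : ℝ) : Set ℂ :=
  {z | ∃ L₁ L₂ : ℝ, 0 ≤ L₁ ∧ 0 ≤ L₂ ∧ L₁ + L₂ = L ∧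
      ∃ ω₁ ∈ f L₁, ∃ ω₂ ∈ g L₂, z = ω₁ + ω₂} ∪ f L ∪ g L

/-- `iterSum f n` is the `(n+1)`-fold sum `f * ⋯ * f`. -/
def iterSum (f : ℝ → Set ℂ) : ℕ → ℝ → Set ℂ
  | 0 => f
  | n + 1 => sumFun (iterSum f n) f

/-- Arclength of `γ` on `[0,t]`. -/
def pathLen (γ : ℝ → ℂ) (t : ℝ) : ℝ := (eVariationOn γ (Set.Icc 0 t)).toReal

/-- `γ : [0,t₁] → ℂ` is an `Ω`-allowed path. -/
def OmAllowed (f : ℝ → Set ℂ) (γ : ℝ → ℂ) (t₁ : ℝ) : Prop :=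
  0 ≤ t₁ ∧ γ 0 = 0 ∧ (∃ K, LipschitzOnWith K γ (Set.Icc 0 t₁)) ∧
    ∀ t ∈ Set.Icc 0 t₁, (pathLen γ t, γ t) ∈ MSet f

/-- The germ `φ` admits analytic continuation along `γ|_{[0,t₁]}`, ending
with the germ `ψ` at `γ t₁`. -/
def ContinuesAlongTo (φ : ℂ → ℂ) (γ : ℝ → ℂ) (t₁ : ℝ) (ψ : ℂ → ℂ) : Prop :=
  ∃ (F : ℝ → ℂ → ℂ) (r : ℝ → ℝ),
    (∀ t ∈ Set.Icc 0 t₁, 0 < r t ∧ DifferentiableOn ℂ (F t) (ball (γ t) (r t))) ∧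
    (∀ t ∈ Set.Icc 0 t₁, ∀ᶠ s in nhdsWithin t (Set.Icc 0 t₁),
        Set.EqOn (F s) (F t) (ball (γ s) (r s) ∩ ball (γ t) (r t))) ∧
    (∀ᶠ z in nhds 0, F 0 z = φ z) ∧
    (∀ᶠ z in nhds (γ t₁), F t₁ z = ψ z)

/-- The germ `φ` admits analytic continuation along `γ|_{[0,t₁]}`. -/
def ContinuesAlong (φ : ℂ → ℂ) (γ : ℝ → ℂ) (t₁ : ℝ) : Prop :=
  ∃ ψ, ContinuesAlongTo φ γ t₁ ψ

/-- `φ` defines a holomorphic germ at `0`. -/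
def HolGermAtZero (φ : ℂ → ℂ) : Prop := ∃ r > 0, DifferentiableOn ℂ φ (ball 0 r)

/-- `Ω`-continuability: analytic continuation along every `Ω`-allowed path. -/
def OmContinuable (f : ℝ → Set ℂ) (φ : ℂ → ℂ) : Prop :=
  HolGermAtZero φ ∧ ∀ γ t₁, OmAllowed f γ t₁ → ContinuesAlong φ γ t₁

/-- Endless continuability. -/
def EndlesslyContinuable (φ : ℂ → ℂ) : Prop :=
  HolGermAtZero φ ∧ ∀ L > (0:ℝ), ∃ F : Set ℂ, F.Finite ∧
    ∀ γ : ℝ → ℂ, γ 0 = 0 → (∃ K, LipschitzOnWith K γ (Set.Icc 0 1)) →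
      pathLen γ 1 < L → (∀ t ∈ Set.Ioc (0:ℝ) 1, γ t ∉ F) →
      ContinuesAlong φ γ 1

/-- Euclidean norm on `ℝ × ℂ ≅ ℝ³`. -/
def eucNorm (p : ℝ × ℂ) : ℝ := Real.sqrt (p.1 ^ 2 + ‖p.2‖ ^ 2)

/-- Euclidean distance on `ℝ × ℂ ≅ ℝ³`. -/
def eucDist (p q : ℝ × ℂ) : ℝ := eucNorm (p - q)

/-- Euclidean distance from a point to a set in `ℝ × ℂ`. -/
def eucSetDist (p : ℝ × ℂ) (S : Set (ℝ × ℂ)) : ℝ := sInf (eucDist p '' S)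

/-- The d.f.s. associated with a closed discrete set `Σ`. -/
def omOf (S : Set ℂ) (L : ℝ) : Set ℂ := {ω ∈ S | ‖ω‖ ≤ L}

/-- `η(v) := dist(v, {(0,0)} ∪ S_Ω)`. -/
def etaFun (f : ℝ → Set ℂ) (v : ℝ × ℂ) : ℝ :=
  eucSetDist v ({((0:ℝ), (0:ℂ))} ∪ SingSet f)

/-- `D(w, v⃗) := Σⱼ η(vⱼ) + |w − Σⱼ vⱼ|`. -/
def DFun (f : ℝ → Set ℂ) (n : ℕ) (w : ℝ × ℂ) (v : Fin n → ℝ × ℂ) : ℝ :=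
  (∑ j, etaFun f (v j)) + eucNorm (w - ∑ j, v j)

/-- Convolution of holomorphic germs: `(f*g)(ζ) = ∫₀^ζ f(ξ)g(ζ-ξ)dξ`. -/
def cvl (f g : ℂ → ℂ) (ζ : ℂ) : ℂ := ζ * ∫ s in (0:ℝ)..1, f (s • ζ) * g (ζ - s • ζ)

/-- Iterated convolution `1 * f₁ * ⋯ * f_n`. -/
def iterConv : (n : ℕ) → (Fin n → ℂ → ℂ) → ℂ → ℂ
  | 0, _ => fun _ => 1
  | n + 1, f => cvl (iterConv n (fun i => f i.castSucc)) (f (Fin.last n))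

/-- The standard simplex `Δ_n`. -/
def simplex (n : ℕ) : Set (Fin n → ℝ) := {s | (∀ i, 0 ≤ s i) ∧ ∑ i, s i ≤ 1}

end


section VFLHelpers

lemma eucNorm_eq' (p : ℝ × ℂ) : eucNorm p = ‖(WithLp.equiv 2 (ℝ × ℂ)).symm p‖ := by
  rw [WithLp.prod_norm_eq_of_L2]
  simp [eucNorm, Real.norm_eq_abs, sq_abs]

lemma eucNorm_nonneg' (p : ℝ × ℂ) : 0 ≤ eucNorm p := Real.sqrt_nonneg _

lemma eucNorm_smul' (c : ℝ) (p : ℝ × ℂ) : eucNorm (c • p) = |c| * eucNorm p := by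
  rw [eucNorm_eq', eucNorm_eq', ← Real.norm_eq_abs,
    ← norm_smul c ((WithLp.equiv 2 (ℝ × ℂ)).symm p)]
  rfl

lemma eucNorm_add_le' (p q : ℝ × ℂ) : eucNorm (p + q) ≤ eucNorm p + eucNorm q := by
  rw [eucNorm_eq', eucNorm_eq', eucNorm_eq']; exact norm_add_le _ _

lemma eucNorm_neg' (p : ℝ × ℂ) : eucNorm (-p) = eucNorm p := by
  rw [eucNorm_eq', eucNorm_eq']; exact norm_neg _

lemma eucNorm_sub_eucNorm_le' (p q : ℝ × ℂ) :
    |eucNorm p - eucNorm q| ≤ eucNorm (p - q) := by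
  rw [eucNorm_eq', eucNorm_eq', eucNorm_eq']
  exact abs_norm_sub_norm_le _ _

lemma eucNorm_sum_le' {n : ℕ} (f : Fin n → ℝ × ℂ) :
    eucNorm (∑ j, f j) ≤ ∑ j, eucNorm (f j) := by
  have h : (WithLp.equiv 2 (ℝ × ℂ)).symm (∑ j, f j)
      = ∑ j, (WithLp.equiv 2 (ℝ × ℂ)).symm (f j) :=
    map_sum (WithLp.linearEquiv 2 ℝ (ℝ × ℂ)).symm f Finset.univ
  simp only [eucNorm_eq']
  rw [h]
  exact norm_sum_le _ _

lemma etaAux_nonneg' (p : ℝ × ℂ) (S : Set (ℝ × ℂ)) :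
    0 ≤ eucSetDist p S :=
  Real.sInf_nonneg (by rintro x ⟨s, -, rfl⟩; exact eucNorm_nonneg' _)

lemma etaAux_lip' (u v : ℝ × ℂ) (S : Set (ℝ × ℂ)) (hS : S.Nonempty) :
    eucSetDist u S ≤ eucNorm (u - v) + eucSetDist v S := by
  have hbdd : ∀ w : ℝ × ℂ, BddBelow (eucDist w '' S) :=
    fun w => ⟨0, by rintro x ⟨s, -, rfl⟩; exact eucNorm_nonneg' _⟩
  have h : ∀ x ∈ eucDist v '' S, eucSetDist u S - eucNorm (u - v) ≤ x := by
    rintro x ⟨s, hs, rfl⟩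
    have h1 : eucSetDist u S ≤ eucDist u s := csInf_le (hbdd u) ⟨s, hs, rfl⟩
    have h3 : u - s = (u - v) + (v - s) := by abel
    have h2 : eucDist u s ≤ eucNorm (u - v) + eucDist v s := by
      rw [eucDist, h3]; exact eucNorm_add_le' _ _
    linarith
  have h4 := le_csInf (hS.image (eucDist v)) h
  simp only [eucSetDist] at h4 ⊢
  linarith

lemma vfl_key {n : ℕ} (a b d : Fin n → ℝ) (A B : ℝ)
    (hA : 0 < A) (hB : 0 < B) (hbn : ∀ j, 0 ≤ b j) (hd : ∀ j, |a j - b j| ≤ d j)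
    (hbB : ∑ j, b j ≤ B) (hAB : |A - B| ≤ 2 * ∑ j, d j) :
    ∑ j, |a j / A - b j / B| ≤ 3 / A * ∑ j, d j := by
  have hdn : ∀ j, 0 ≤ d j := fun j => (abs_nonneg _).trans (hd j)
  have hSd : 0 ≤ ∑ j, d j := Finset.sum_nonneg fun j _ => hdn j
  have hABnn : 0 ≤ |A - B| / (A * B) := by positivity
  calc ∑ j, |a j / A - b j / B|
      ≤ ∑ j, (d j / A + b j * (|A - B| / (A * B))) := by
        apply Finset.sum_le_sum; intro j _
        have heq : a j / A - b j / B = (a j - b j) / A + b j * (B - A) / (A * B) := by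
          field_simp; ring
        have h1 : |(a j - b j) / A| ≤ d j / A := by
          rw [abs_div, abs_of_pos hA]
          gcongr
          exact hd j
        have h2 : |b j * (B - A) / (A * B)| = b j * (|A - B| / (A * B)) := by
          rw [abs_div, abs_mul, abs_of_nonneg (hbn j), abs_of_pos (mul_pos hA hB),
            abs_sub_comm, mul_div_assoc]
        calc |a j / A - b j / B| = |(a j - b j) / A + b j * (B - A) / (A * B)| := by rw [heq]
          _ ≤ |(a j - b j) / A| + |b j * (B - A) / (A * B)| := abs_add_le _ _
          _ ≤ d j / A + b j * (|A - B| / (A * B)) := by rw [h2]; linarith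
    _ = (∑ j, d j) / A + (∑ j, b j) * (|A - B| / (A * B)) := by
        rw [Finset.sum_add_distrib, ← Finset.sum_div, ← Finset.sum_mul]
    _ ≤ (∑ j, d j) / A + B * (|A - B| / (A * B)) := by gcongr
    _ = (∑ j, d j) / A + |A - B| / A := by field_simp
    _ ≤ (∑ j, d j) / A + (2 * ∑ j, d j) / A := by gcongr
    _ = 3 / A * ∑ j, d j := by field_simp; ring

end VFLHelpers

/-- Lipschitz estimate for the deformation vector field
`Xⱼ(v⃗) = (η(vⱼ)/D(v⃗)) ξ`. -/
theorem vector_field_lipschitz (Ω : DFS) (n : ℕ) (w ξ : ℝ × ℂ)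
    (u v : Fin n → ℝ × ℂ)
    (hu : 0 < DFun Ω.sets n w u) (hv : 0 < DFun Ω.sets n w v) :
    ∑ j, eucNorm ((etaFun Ω.sets (u j) / DFun Ω.sets n w u) • ξ -
        (etaFun Ω.sets (v j) / DFun Ω.sets n w v) • ξ)
      ≤ 3 * (eucNorm ξ / DFun Ω.sets n w u) * ∑ j, eucNorm (u j - v j) := by
  have hS : ({((0:ℝ), (0:ℂ))} ∪ SingSet Ω.sets).Nonempty := ⟨(0, 0), Or.inl rfl⟩
  set A := DFun Ω.sets n w u with hAdef
  set B := DFun Ω.sets n w v with hBdef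
  have hd : ∀ j, |etaFun Ω.sets (u j) - etaFun Ω.sets (v j)| ≤ eucNorm (u j - v j) := by
    intro j
    rw [abs_sub_le_iff]
    have hsym : v j - u j = -(u j - v j) := by abel
    have e1 := etaAux_lip' (u j) (v j) ({((0:ℝ), (0:ℂ))} ∪ SingSet Ω.sets) hS
    have e2 := etaAux_lip' (v j) (u j) ({((0:ℝ), (0:ℂ))} ∪ SingSet Ω.sets) hS
    rw [hsym, eucNorm_neg'] at e2
    constructor
    · simpa [etaFun] using sub_le_iff_le_add.mpr e1
    · simpa [etaFun] using sub_le_iff_le_add.mpr e2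
  have hbn : ∀ j, 0 ≤ etaFun Ω.sets (v j) := fun j => etaAux_nonneg' _ _
  have hbB : ∑ j, etaFun Ω.sets (v j) ≤ B :=
    le_add_of_nonneg_right (eucNorm_nonneg' _)
  have hAB : |A - B| ≤ 2 * ∑ j, eucNorm (u j - v j) := by
    have h7 : |∑ j, (etaFun Ω.sets (u j) - etaFun Ω.sets (v j))|
        ≤ ∑ j, eucNorm (u j - v j) :=
      (Finset.abs_sum_le_sum_abs _ _).trans (Finset.sum_le_sum fun j _ => hd j)
    have h5 : |eucNorm (w - ∑ j, u j) - eucNorm (w - ∑ j, v j)|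
        ≤ ∑ j, eucNorm (u j - v j) := by
      refine (eucNorm_sub_eucNorm_le' _ _).trans ?_
      have h6 : (w - ∑ j, u j) - (w - ∑ j, v j) = ∑ j, (v j - u j) := by
        rw [Finset.sum_sub_distrib]; abel
      rw [h6]
      refine (eucNorm_sum_le' _).trans ?_
      apply Finset.sum_le_sum; intro j _
      have hsym : v j - u j = -(u j - v j) := by abel
      rw [hsym, eucNorm_neg']
    have hsplit : A - B = (∑ j, (etaFun Ω.sets (u j) - etaFun Ω.sets (v j)))
        + (eucNorm (w - ∑ j, u j) - eucNorm (w - ∑ j, v j)) := by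
      rw [hAdef, hBdef]
      simp only [DFun, Finset.sum_sub_distrib]
      ring
    calc |A - B| ≤ |∑ j, (etaFun Ω.sets (u j) - etaFun Ω.sets (v j))|
          + |eucNorm (w - ∑ j, u j) - eucNorm (w - ∑ j, v j)| := by
          rw [hsplit]; exact abs_add_le _ _
      _ ≤ 2 * ∑ j, eucNorm (u j - v j) := by linarith
  have hkey := vfl_key (fun j => etaFun Ω.sets (u j)) (fun j => etaFun Ω.sets (v j))
    (fun j => eucNorm (u j - v j)) A B hu hv hbn hd hbB hAB
  calc ∑ j, eucNorm ((etaFun Ω.sets (u j) / A) • ξ - (etaFun Ω.sets (v j) / B) • ξ)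
      = ∑ j, |etaFun Ω.sets (u j) / A - etaFun Ω.sets (v j) / B| * eucNorm ξ := by
        refine Finset.sum_congr rfl fun j _ => ?_
        rw [← sub_smul, eucNorm_smul']
    _ = (∑ j, |etaFun Ω.sets (u j) / A - etaFun Ω.sets (v j) / B|) * eucNorm ξ :=
        (Finset.sum_mul _ _ _).symm
    _ ≤ (3 / A * ∑ j, eucNorm (u j - v j)) * eucNorm ξ :=
        mul_le_mul_of_nonneg_right hkey (eucNorm_nonneg' ξ)
    _ = 3 * (eucNorm ξ / A) * ∑ j, eucNorm (u j - v j) := by ring
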